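/- Set S = D(I_I − P^D_ℛ). Then the (K+L)×(K+L) block matrix 𝐉 = [[EᵀSE, EᵀSZ],[ZᵀSE, ZᵀSZ]] is invertible, and its inverse equals the block matrix Σ_λ̂ = [[Bᵀ P^D_ℋ D⁻¹ B, Bᵀ P^D_ℋ D⁻¹ C Z°⁻ᵀ],[Z°⁻ Cᵀ P^D_ℋ D⁻¹ B, Z°⁻ Cᵀ P^D_ℋ D⁻¹ C Z°⁻ᵀ]]; i.e. for sampling conditional on X the inverse of the covariance matrix of the score vector of the multivariate linear logistic regression model coincides with the asymptotic covariance matrix Σ_λ̂ of the compound parameter estimator λ̂ = (γ̂°, θ̂⃗) from fixed-cells contingency-table asymptotics. -/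

import Mathlib

open Matrix BigOperators

noncomputable section

/-- Cells `(j,k)` of a `(J+1) × (K+1)` contingency table. -/
abbrev Cell (J K : ℕ) := Fin (J + 1) × Fin (K + 1)

/-- Standard unit vector `e_{jk}` in `ℝ^I`. -/
def eV {J K : ℕ} (c : Cell J K) : Cell J K → ℝ := Pi.single c 1

/-- Row-sum vector `e_{j+} = Σ_k e_{jk}`. -/
def eRow {J K : ℕ} (j : Fin (J + 1)) : Cell J K → ℝ := ∑ k : Fin (K + 1), eV (j, k)

/-- Column-sum vector `e_{+k} = Σ_j e_{jk}`. -/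
def eCol {J K : ℕ} (k : Fin (K + 1)) : Cell J K → ℝ := ∑ j : Fin (J + 1), eV (j, k)

/-- The all-ones vector `e_{++}`. -/
def eAll (J K : ℕ) : Cell J K → ℝ := ∑ j : Fin (J + 1), ∑ k : Fin (K + 1), eV (j, k)

/-- The row space `ℛ = span{e_{0+},…,e_{J+}}`. -/
def rowSpace (J K : ℕ) : Submodule ℝ (Cell J K → ℝ) :=
  Submodule.span ℝ (Set.range (eRow (J := J) (K := K)))

/-- The column space `𝒞 = span{e_{+0},…,e_{+K}}`. -/
def colSpace (J K : ℕ) : Submodule ℝ (Cell J K → ℝ) :=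
  Submodule.span ℝ (Set.range (eCol (J := J) (K := K)))

/-- The diagonal space `𝒟 = span{e_{++}}`. -/
def diagSpace (J K : ℕ) : Submodule ℝ (Cell J K → ℝ) :=
  Submodule.span ℝ {eAll J K}

/-- The marginal space `𝒯 = ℛ + 𝒞`. -/
def margSpace (J K : ℕ) : Submodule ℝ (Cell J K → ℝ) := rowSpace J K ⊔ colSpace J K

/-- `P` is the `D`-orthogonal projection matrix onto the subspace `S`:
`P x ∈ S` and `x - P x` is `D`-orthogonal to `S`, for every `x`. -/
def IsProjD {J K : ℕ} (D : Matrix (Cell J K) (Cell J K) ℝ) (S : Submodule ℝ (Cell J K → ℝ))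
    (P : Matrix (Cell J K) (Cell J K) ℝ) : Prop :=
  ∀ x, P.mulVec x ∈ S ∧ ∀ s ∈ S, (x - P.mulVec x) ⬝ᵥ D.mulVec s = 0

/-- The `D`-orthogonal complement of a subspace `S`. -/
def perpD {J K : ℕ} (D : Matrix (Cell J K) (Cell J K) ℝ) (S : Submodule ℝ (Cell J K → ℝ)) :
    Submodule ℝ (Cell J K → ℝ) where
  carrier := {x | ∀ t ∈ S, x ⬝ᵥ D.mulVec t = 0}
  add_mem' := by
    intro a b ha hb t ht
    simp only [Set.mem_setOf_eq] at *
    simp [add_dotProduct, ha t ht, hb t ht]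
  zero_mem' := by
    intro t ht
    simp
  smul_mem' := by
    intro c a ha t ht
    simp only [Set.mem_setOf_eq] at *
    simp [smul_dotProduct, ha t ht]

/-- The vector `c_{jk} = e_{jk} + e_{00} - e_{j0} - e_{0k}` (for `1 ≤ j`, `1 ≤ k`). -/
def cVec {J K : ℕ} (j : Fin J) (k : Fin K) : Cell J K → ℝ :=
  eV (j.succ, k.succ) + eV (0, 0) - eV (j.succ, 0) - eV (0, k.succ)

/-- The `I × (JK)` matrix `C` with columns `c_{jk}`. -/
def Cmat (J K : ℕ) : Matrix (Cell J K) (Fin J × Fin K) ℝ :=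
  fun i jk => cVec jk.1 jk.2 i

/-- The vector `b_k = e_{0k} - e_{00}` (for `1 ≤ k`). -/
def bVec {J K : ℕ} (k : Fin K) : Cell J K → ℝ :=
  eV ((0 : Fin (J + 1)), k.succ) - eV (0, 0)

/-- The `I × K` matrix `B` with columns `b_k`. -/
def Bmat (J K : ℕ) : Matrix (Cell J K) (Fin K) ℝ :=
  fun i k => bVec k i

/-- The `I × K` matrix `E` with columns `e_{+1},…,e_{+K}`. -/
def Emat (J K : ℕ) : Matrix (Cell J K) (Fin K) ℝ :=
  fun i k => eCol k.succ i

/-- Column space of a matrix. -/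
def colSpan {m n : Type*} [Fintype n] (A : Matrix m n ℝ) : Submodule ℝ (m → ℝ) :=
  Submodule.span ℝ (Set.range fun j => fun i => A i j)

/-- The reduced `(JK) × L` covariate matrix `Z°` with rows `z_{jk}ᵀ`, `j,k ≥ 1`. -/
def Zred {J K : ℕ} {L : Type*} (Z : Matrix (Cell J K) L ℝ) : Matrix (Fin J × Fin K) L ℝ :=
  fun jk => Z (jk.1.succ, jk.2.succ)

/-- The model space `ℋ = 𝒯 + col(Z)` of the log-linear model
`η_{jk} = α + ρ_j + γ_k + z_{jk}ᵀ θ`. -/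
def modelSpace {J K : ℕ} {L : Type*} [Fintype L] (Z : Matrix (Cell J K) L ℝ) :
    Submodule ℝ (Cell J K → ℝ) :=
  margSpace J K ⊔ colSpan Z

end

noncomputable section AuxNK
open Matrix

variable {J K L : ℕ}

lemma eV_apply (c i : Cell J K) : eV c i = if i = c then 1 else 0 := by
  simp [eV, Pi.single_apply]

lemma eRow_apply (j : Fin (J+1)) (i : Cell J K) : eRow j i = if i.1 = j then 1 else 0 := by
  rcases i with ⟨a, b⟩
  simp only [eRow, Finset.sum_apply, eV_apply, Prod.mk.injEq, ite_and, Prod.fst, Prod.snd]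
  by_cases h : a = j
  · subst h; simp
  · simp [h]

lemma eCol_apply (k : Fin (K+1)) (i : Cell J K) : eCol k i = if i.2 = k then 1 else 0 := by
  rcases i with ⟨a, b⟩
  simp only [eCol, Finset.sum_apply, eV_apply, Prod.mk.injEq, ite_and, Prod.fst, Prod.snd]
  by_cases h : b = k
  · subst h; simp
  · simp [h]

/-- `b_k ⬝ v` as a functional. -/
def dB (k : Fin K) (v : Cell J K → ℝ) : ℝ := v (0, k.succ) - v (0, 0)

/-- `c_{jk} ⬝ v` as a functional. -/
def dC (p : Fin J × Fin K) (v : Cell J K → ℝ) : ℝ :=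
  v (p.1.succ, p.2.succ) + v (0, 0) - v (p.1.succ, 0) - v (0, p.2.succ)

lemma dB_eRow (k : Fin K) (j : Fin (J+1)) : dB k (eRow j) = 0 := by
  simp [dB, eRow_apply]

lemma dC_eRow (p : Fin J × Fin K) (j : Fin (J+1)) : dC p (eRow j) = 0 := by
  simp only [dC, eRow_apply]
  by_cases h1 : (0 : Fin (J+1)) = j <;> by_cases h2 : p.1.succ = j <;> simp [h1, h2] <;> ring

lemma dB_eCol_zero (k : Fin K) : dB (J := J) k (eCol 0) = -1 := by
  simp [dB, eCol_apply, Fin.succ_ne_zero]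

lemma dC_eCol_zero (p : Fin J × Fin K) : dC p (eCol (0 : Fin (K+1))) = 0 := by
  simp [dC, eCol_apply, Fin.succ_ne_zero]

lemma dB_eCol_succ (k k' : Fin K) : dB (J := J) k (eCol k'.succ) = if k = k' then 1 else 0 := by
  simp only [dB, eCol_apply]
  by_cases h : k = k'
  · subst h; simp [(Fin.succ_ne_zero k).symm]
  · simp [h, (Fin.succ_ne_zero k').symm, fun hh => h (Fin.succ_injective _ hh)]

lemma dC_eCol_succ (p : Fin J × Fin K) (k' : Fin K) : dC p (eCol k'.succ) = 0 := by
  simp only [dC, eCol_apply]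
  by_cases h : p.2.succ = k'.succ <;>
    simp [h, (Fin.succ_ne_zero k').symm, Fin.succ_ne_zero, h] <;> ring

end AuxNK

noncomputable section Aux2
open Matrix

variable {J K L : ℕ}

/-- `Z°⁻ = (Z°ᵀZ°)⁻¹ Z°ᵀ`. -/
def Zminus (Z : Matrix (Cell J K) (Fin L) ℝ) : Matrix (Fin L) (Fin J × Fin K) ℝ :=
  ((Zred Z)ᵀ * Zred Z)⁻¹ * (Zred Z)ᵀ

/-- `X = [E  Z]`. -/
def Xfc (Z : Matrix (Cell J K) (Fin L) ℝ) : Matrix (Cell J K) (Fin K ⊕ Fin L) ℝ :=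
  fromCols (Emat J K) Z

/-- `A = [B  C Z°⁻ᵀ]`. -/
def Afc (Z : Matrix (Cell J K) (Fin L) ℝ) : Matrix (Cell J K) (Fin K ⊕ Fin L) ℝ :=
  fromCols (Bmat J K) (Cmat J K * (Zminus Z)ᵀ)

lemma eV_dot (c : Cell J K) (v : Cell J K → ℝ) : eV c ⬝ᵥ v = v c := by
  simp [eV, single_dotProduct]

lemma bVec_dot (k : Fin K) (v : Cell J K → ℝ) : bVec (J := J) k ⬝ᵥ v = dB k v := by
  simp [bVec, sub_dotProduct, eV_dot, dB]

lemma cVec_dot (p : Fin J × Fin K) (v : Cell J K → ℝ) : cVec p.1 p.2 ⬝ᵥ v = dC p v := by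
  simp [cVec, sub_dotProduct, add_dotProduct, eV_dot, dC]

lemma BT_mulVec (v : Cell J K → ℝ) : (Bmat J K)ᵀ *ᵥ v = fun k => dB k v := by
  funext k
  exact bVec_dot k v

lemma CT_mulVec (v : Cell J K → ℝ) : (Cmat J K)ᵀ *ᵥ v = fun p => dC p v := by
  funext p
  exact cVec_dot p v

lemma AT_mulVec (Z : Matrix (Cell J K) (Fin L) ℝ) (v : Cell J K → ℝ) :
    (Afc Z)ᵀ *ᵥ v = Sum.elim (fun k => dB k v) (Zminus Z *ᵥ (fun p => dC p v)) := by
  rw [Afc, transpose_fromCols, fromRows_mulVec, BT_mulVec, transpose_mul,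
    transpose_transpose, ← Matrix.mulVec_mulVec, CT_mulVec]

lemma isUnit_of_rank_eq_card {n : Type*} [Fintype n] [DecidableEq n] (A : Matrix n n ℝ)
    (h : A.rank = Fintype.card n) : IsUnit A := by
  rw [← Matrix.mulVec_injective_iff_isUnit]
  have hr : LinearMap.range A.mulVecLin = ⊤ := by
    apply Submodule.eq_top_of_finrank_eq
    rw [← Matrix.rank] at *
    simp [h, Module.finrank_pi]
  have hs : Function.Surjective A.mulVecLin := LinearMap.range_eq_top.mp hr
  have hi : Function.Injective A.mulVecLin := by
    rw [LinearMap.injective_iff_surjective]; exact hs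
  exact hi

lemma gram_eq_one {Z : Matrix (Cell J K) (Fin L) ℝ} (hZrank : (Zred Z).rank = L) :
    Zminus Z * Zred Z = 1 := by
  have hU : IsUnit ((Zred Z)ᵀ * Zred Z) := by
    apply isUnit_of_rank_eq_card
    rw [Matrix.rank_transpose_mul_self, hZrank, Fintype.card_fin]
  rw [Zminus, Matrix.mul_assoc, Matrix.nonsing_inv_mul _ ((Matrix.isUnit_iff_isUnit_det _).mp hU)]

lemma dB_Zcol {Z : Matrix (Cell J K) (Fin L) ℝ} (hZcol : ∀ k, Z (0, k) = 0) (k : Fin K)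
    (l : Fin L) : dB k (fun i => Z i l) = 0 := by
  show Z (0, k.succ) l - Z (0, 0) l = 0
  rw [hZcol, hZcol]; simp

lemma dC_Zcol {Z : Matrix (Cell J K) (Fin L) ℝ} (hZrow : ∀ j, Z (j, 0) = 0)
    (hZcol : ∀ k, Z (0, k) = 0) (p : Fin J × Fin K) (l : Fin L) :
    dC p (fun i => Z i l) = Zred Z p l := by
  show Z (p.1.succ, p.2.succ) l + Z (0, 0) l - Z (p.1.succ, 0) l - Z (0, p.2.succ) l = _
  rw [hZcol 0, hZrow p.1.succ, hZcol p.2.succ]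
  simp [Zred]

end Aux2

noncomputable section Aux3
open Matrix

variable {J K L : ℕ}

lemma mul_apply_eq_mulVec {a b c : Type*} [Fintype b] (M : Matrix a b ℝ) (N : Matrix b c ℝ)
    (s : a) (t : c) : (M * N) s t = (M *ᵥ (fun i => N i t)) s := rfl

lemma Xfc_col_inl (Z : Matrix (Cell J K) (Fin L) ℝ) (k : Fin K) :
    (fun i => Xfc Z i (Sum.inl k)) = eCol k.succ := rfl

lemma Xfc_col_inr (Z : Matrix (Cell J K) (Fin L) ℝ) (l : Fin L) :
    (fun i => Xfc Z i (Sum.inr l)) = fun i => Z i l := rfl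

lemma AT_X {Z : Matrix (Cell J K) (Fin L) ℝ} (hZrow : ∀ j, Z (j, 0) = 0)
    (hZcol : ∀ k, Z (0, k) = 0) (hZrank : (Zred Z).rank = L) :
    (Afc Z)ᵀ * Xfc Z = 1 := by
  ext s t
  rw [mul_apply_eq_mulVec]
  cases t with
  | inl k' =>
    rw [Xfc_col_inl, AT_mulVec]
    cases s with
    | inl k =>
      simp [dB_eCol_succ, Matrix.one_apply]
    | inr l =>
      have h0 : (fun p => dC (J := J) (K := K) p (eCol k'.succ)) = 0 := by
        funext p; exact dC_eCol_succ p k'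
      simp [h0, Matrix.one_apply]
  | inr l' =>
    rw [Xfc_col_inr, AT_mulVec]
    cases s with
    | inl k =>
      simp [dB_Zcol hZcol, Matrix.one_apply]
    | inr l =>
      have h0 : (fun p => dC p (fun i => Z i l')) = fun p => Zred Z p l' := by
        funext p; exact dC_Zcol hZrow hZcol p l'
      rw [Sum.elim_inr, h0, ← mul_apply_eq_mulVec, gram_eq_one hZrank]
      simp [Matrix.one_apply]

lemma AT_rowSpace (Z : Matrix (Cell J K) (Fin L) ℝ) {v : Cell J K → ℝ}
    (hv : v ∈ rowSpace J K) : (Afc Z)ᵀ *ᵥ v = 0 := by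
  have hle : rowSpace J K ≤ LinearMap.ker (Matrix.mulVecLin (Afc Z)ᵀ) := by
    rw [rowSpace, Submodule.span_le]
    rintro _ ⟨j, rfl⟩
    simp only [SetLike.mem_coe, LinearMap.mem_ker, Matrix.mulVecLin_apply]
    rw [AT_mulVec]
    have h0 : (fun p => dC (J := J) (K := K) p (eRow j)) = 0 := by
      funext p; exact dC_eRow p j
    funext s
    cases s with
    | inl k => simp [dB_eRow]
    | inr l => simp [h0]
  have := hle hv
  rwa [LinearMap.mem_ker, Matrix.mulVecLin_apply] at this

end Aux3

noncomputable section Aux4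
open Matrix

variable {J K L : ℕ}

lemma sum_eCol_eq_sum_eRow :
    (∑ k : Fin (K+1), eCol k) = ∑ j : Fin (J+1), eRow (K := K) j := by
  unfold eCol eRow
  rw [Finset.sum_comm]

lemma XAT_fix {Z : Matrix (Cell J K) (Fin L) ℝ} (hZrow : ∀ j, Z (j, 0) = 0)
    (hZcol : ∀ k, Z (0, k) = 0) (hZrank : (Zred Z).rank = L) {h : Cell J K → ℝ}
    (hh : h ∈ modelSpace Z) :
    h - (Xfc Z * (Afc Z)ᵀ) *ᵥ h ∈ rowSpace J K := by
  set f : (Cell J K → ℝ) →ₗ[ℝ] (Cell J K → ℝ) :=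
    LinearMap.id - (Xfc Z * (Afc Z)ᵀ).mulVecLin with hf
  have key : modelSpace Z ≤ Submodule.comap f (rowSpace J K) := by
    rw [modelSpace, margSpace]
    apply sup_le (sup_le ?_ ?_) ?_
    · -- rowSpace generators
      rw [rowSpace, Submodule.span_le]
      rintro _ ⟨j, rfl⟩
      simp only [SetLike.mem_coe, Submodule.mem_comap, hf, LinearMap.sub_apply,
        LinearMap.id_apply, Matrix.mulVecLin_apply]
      rw [← Matrix.mulVec_mulVec, AT_rowSpace Z (Submodule.subset_span ⟨j, rfl⟩),
        Matrix.mulVec_zero, sub_zero]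
      exact Submodule.subset_span ⟨j, rfl⟩
    · -- colSpace generators
      rw [colSpace, Submodule.span_le]
      rintro _ ⟨k, rfl⟩
      simp only [SetLike.mem_coe, Submodule.mem_comap, hf, LinearMap.sub_apply,
        LinearMap.id_apply, Matrix.mulVecLin_apply]
      rw [← Matrix.mulVec_mulVec, AT_mulVec]
      induction k using Fin.cases with
      | zero =>
        have h1 : (fun k : Fin K => dB (J := J) k (eCol 0)) = fun _ => (-1 : ℝ) := by
          funext k; exact dB_eCol_zero k
        have h2 : (fun p => dC (J := J) (K := K) p (eCol 0)) = 0 := by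
          funext p; exact dC_eCol_zero p
        rw [h1, h2, Matrix.mulVec_zero, Xfc, fromCols_mulVec_sumElim,
          Matrix.mulVec_zero, add_zero]
        have h3 : Emat J K *ᵥ (fun _ => (-1 : ℝ)) = -(∑ k' : Fin K, eCol k'.succ) := by
          funext i
          simp only [Matrix.mulVec, dotProduct, Emat, mul_neg, mul_one,
            Finset.sum_neg_distrib, Pi.neg_apply, Finset.sum_apply]
        rw [h3, sub_neg_eq_add]
        have h4 : eCol 0 + (∑ k' : Fin K, eCol k'.succ) = ∑ j : Fin (J+1), eRow (K := K) j := by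
          rw [← sum_eCol_eq_sum_eRow, Fin.sum_univ_succ]
        rw [h4]
        exact Submodule.sum_mem _ fun j _ => Submodule.subset_span ⟨j, rfl⟩
      | succ k' =>
        have h1 : (fun k : Fin K => dB (J := J) k (eCol k'.succ)) = Pi.single k' 1 := by
          funext k; rw [dB_eCol_succ, Pi.single_apply]
        have h2 : (fun p => dC (J := J) (K := K) p (eCol k'.succ)) = 0 := by
          funext p; exact dC_eCol_succ p k'
        rw [h1, h2, Matrix.mulVec_zero, Xfc, fromCols_mulVec_sumElim,
          Matrix.mulVec_zero, add_zero, Matrix.mulVec_single]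
        have h3 : (fun i => Emat J K i k' * 1) = eCol k'.succ := by
          funext i; rw [mul_one]; rfl
        rw [MulOpposite.op_one, one_smul, show (Emat J K).col k' = eCol k'.succ from rfl, sub_self]
        exact Submodule.zero_mem _
    · -- colSpan Z generators
      rw [colSpan, Submodule.span_le]
      rintro _ ⟨l, rfl⟩
      simp only [SetLike.mem_coe, Submodule.mem_comap, hf, LinearMap.sub_apply,
        LinearMap.id_apply, Matrix.mulVecLin_apply]
      rw [← Matrix.mulVec_mulVec, AT_mulVec]
      have h1 : (fun k => dB k (fun i => Z i l)) = 0 := by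
        funext k; exact dB_Zcol hZcol k l
      have h2 : (fun p => dC p (fun i => Z i l)) = fun p => Zred Z p l := by
        funext p; exact dC_Zcol hZrow hZcol p l
      have h3 : Zminus Z *ᵥ (fun p => Zred Z p l) = Pi.single l 1 := by
        funext l'
        rw [← mul_apply_eq_mulVec, gram_eq_one hZrank, Pi.single_apply, Matrix.one_apply]
      rw [h1, h2, h3, Xfc, fromCols_mulVec_sumElim, Matrix.mulVec_zero, zero_add,
        Matrix.mulVec_single]
      have h4 : (fun i => Z i l * 1) = fun i => Z i l := by funext i; rw [mul_one]
      rw [MulOpposite.op_one, one_smul, show Z.col l = (fun i => Z i l) from rfl, sub_self]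
      exact Submodule.zero_mem _
  have := key hh
  rw [Submodule.mem_comap, hf, LinearMap.sub_apply, LinearMap.id_apply,
    Matrix.mulVecLin_apply] at this
  exact this

end Aux4

noncomputable section Aux5
open Matrix

variable {J K L : ℕ}

lemma proj_fix {μ : Cell J K → ℝ} (hμ : ∀ i, 0 < μ i) {S : Submodule ℝ (Cell J K → ℝ)}
    {P : Matrix (Cell J K) (Cell J K) ℝ} (hP : IsProjD (Matrix.diagonal μ) S P)
    {x : Cell J K → ℝ} (hx : x ∈ S) : P *ᵥ x = x := by
  set v := x - P *ᵥ x with hvdef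
  have hv : v ∈ S := S.sub_mem hx (hP x).1
  have h0 := (hP x).2 v hv
  have hsum : ∑ i, v i * (μ i * v i) = 0 := by
    rw [← h0]
    simp only [dotProduct, Matrix.mulVec_diagonal]
    rfl
  have hnn : ∀ j ∈ Finset.univ, 0 ≤ v j * (μ j * v j) := by
    intro j _
    have := (hμ j).le
    nlinarith [sq_nonneg (v j)]
  have hz : ∀ i, v i = 0 := by
    intro i
    have hi := (Finset.sum_eq_zero_iff_of_nonneg hnn).mp hsum i (Finset.mem_univ i)
    rcases mul_eq_zero.mp hi with h | h
    · exact h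
    · rcases mul_eq_zero.mp h with h' | h'
      · exact absurd h' (hμ i).ne'
      · exact h'
  have : v = 0 := funext hz
  rw [hvdef, sub_eq_zero] at this
  exact this.symm

lemma proj_selfadj {μ : Cell J K → ℝ} {S : Submodule ℝ (Cell J K → ℝ)}
    {P : Matrix (Cell J K) (Cell J K) ℝ} (hP : IsProjD (Matrix.diagonal μ) S P) :
    Matrix.diagonal μ * P = Pᵀ * Matrix.diagonal μ := by
  have key : ∀ a b : Cell J K, μ a * P a b =
      ∑ i, (P *ᵥ Pi.single a 1) i * (μ i * (P *ᵥ Pi.single b 1) i) := by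
    intro a b
    have h := (hP (Pi.single a 1)).2 _ (hP (Pi.single b 1)).1
    rw [sub_dotProduct, sub_eq_zero] at h
    have hL : Pi.single a (1:ℝ) ⬝ᵥ (Matrix.diagonal μ *ᵥ (P *ᵥ Pi.single b 1)) = μ a * P a b := by
      rw [single_dotProduct, Matrix.mulVec_diagonal]
      simp
    rw [hL] at h
    rw [h]
    simp [dotProduct, Matrix.mulVec_diagonal]
  ext i j
  rw [Matrix.diagonal_mul, Matrix.mul_diagonal, Matrix.transpose_apply, key i j]
  have h2 := key j i
  have h3 : (∑ x, (P *ᵥ Pi.single i 1) x * (μ x * (P *ᵥ Pi.single j 1) x)) =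
      ∑ x, (P *ᵥ Pi.single j 1) x * (μ x * (P *ᵥ Pi.single i 1) x) := by
    apply Finset.sum_congr rfl
    intro x _
    ring
  rw [h3, ← h2]
  ring

lemma eq_of_mulVec_eq {m n : Type*} [Fintype n] [DecidableEq n] {M N : Matrix m n ℝ}
    (h : ∀ v, M *ᵥ v = N *ᵥ v) : M = N := by
  ext i j
  have := congrFun (h (Pi.single j 1)) i
  simpa using this

lemma mul_eq_of_cols {n c : Type*} [Fintype n] {P : Matrix n n ℝ} {M : Matrix n c ℝ}
    (h : ∀ t, P *ᵥ (fun i => M i t) = fun i => M i t) : P * M = M := by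
  ext i t
  rw [mul_apply_eq_mulVec, h]

lemma selfadj_mul {n m : Type*} [Fintype n] {D P : Matrix n n ℝ} (h : D * P = Pᵀ * D)
    (M : Matrix n m ℝ) : D * (P * M) = Pᵀ * (D * M) := by
  rw [← Matrix.mul_assoc, h, Matrix.mul_assoc]

end Aux5
/-- for sampling conditional on `X`, the covariance matrix
`𝐉 = [[EᵀSE, EᵀSZ],[ZᵀSE, ZᵀSZ]]` of the score vector (with `S = D(I − P^D_ℛ)`) is
invertible and its inverse is the block matrix `Σ_λ̂` from fixed-cells
contingency-table asymptotics. -/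
theorem score_covariance_inverse_eq_lambda_covariance
    {J K L : ℕ} (hJ : 1 ≤ J) (hK : 1 ≤ K) (hL : 1 ≤ L)
    (μ : Cell J K → ℝ) (hμ : ∀ i, 0 < μ i)
    (Z : Matrix (Cell J K) (Fin L) ℝ)
    (hZrow : ∀ j, Z (j, 0) = 0) (hZcol : ∀ k, Z (0, k) = 0)
    (hZrank : (Zred Z).rank = L)
    (PH : Matrix (Cell J K) (Cell J K) ℝ)
    (hPH : IsProjD (Matrix.diagonal μ) (modelSpace Z) PH)
    (PR : Matrix (Cell J K) (Cell J K) ℝ)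
    (hPR : IsProjD (Matrix.diagonal μ) (rowSpace J K) PR)
    (S : Matrix (Cell J K) (Cell J K) ℝ)
    (hS : S = Matrix.diagonal μ * (1 - PR)) :
    IsUnit (Matrix.fromBlocks
        ((Emat J K)ᵀ * S * Emat J K) ((Emat J K)ᵀ * S * Z)
        (Zᵀ * S * Emat J K) (Zᵀ * S * Z)) ∧
    (Matrix.fromBlocks
        ((Emat J K)ᵀ * S * Emat J K) ((Emat J K)ᵀ * S * Z)
        (Zᵀ * S * Emat J K) (Zᵀ * S * Z))⁻¹ =
      Matrix.fromBlocks
        ((Bmat J K)ᵀ * PH * (Matrix.diagonal μ)⁻¹ * Bmat J K)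
        ((Bmat J K)ᵀ * PH * (Matrix.diagonal μ)⁻¹ * Cmat J K *
          (((Zred Z)ᵀ * Zred Z)⁻¹ * (Zred Z)ᵀ)ᵀ)
        (((Zred Z)ᵀ * Zred Z)⁻¹ * (Zred Z)ᵀ * (Cmat J K)ᵀ * PH * (Matrix.diagonal μ)⁻¹ *
          Bmat J K)
        (((Zred Z)ᵀ * Zred Z)⁻¹ * (Zred Z)ᵀ * (Cmat J K)ᵀ * PH * (Matrix.diagonal μ)⁻¹ *
          Cmat J K * (((Zred Z)ᵀ * Zred Z)⁻¹ * (Zred Z)ᵀ)ᵀ) := by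

  classical
  -- basic facts about D
  have hDdet : IsUnit (Matrix.diagonal μ).det := by
    rw [Matrix.det_diagonal]
    exact isUnit_iff_ne_zero.mpr (Finset.prod_pos (fun i _ => hμ i)).ne'
  have hDDi : Matrix.diagonal μ * (Matrix.diagonal μ)⁻¹ = 1 :=
    Matrix.mul_nonsing_inv _ hDdet
  have hDM0 : Matrix.diagonal μ * ((Matrix.diagonal μ)⁻¹ * Afc Z) = Afc Z := by
    rw [← Matrix.mul_assoc, hDDi, Matrix.one_mul]
  -- columns of X lie in the model space
  have hXcols : ∀ t, (fun i => Xfc Z i t) ∈ modelSpace Z := by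
    intro t
    cases t with
    | inl k =>
      rw [Xfc_col_inl]
      exact Submodule.mem_sup_left (Submodule.mem_sup_right (Submodule.subset_span ⟨k.succ, rfl⟩))
    | inr l =>
      rw [Xfc_col_inr]
      exact Submodule.mem_sup_right (Submodule.subset_span ⟨l, rfl⟩)
  have hPHX : PH * Xfc Z = Xfc Z := mul_eq_of_cols fun t => proj_fix hμ hPH (hXcols t)
  have hrow_le : rowSpace J K ≤ modelSpace Z := le_trans le_sup_left le_sup_left
  have hPRXcols : ∀ t, (fun i => (PR * Xfc Z) i t) ∈ rowSpace J K := by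
    intro t
    have hcol : (fun i => (PR * Xfc Z) i t) = PR *ᵥ (fun i => Xfc Z i t) := by
      funext i; rw [mul_apply_eq_mulVec]
    rw [hcol]
    exact (hPR _).1
  have hPHPRX : PH * (PR * Xfc Z) = PR * Xfc Z :=
    mul_eq_of_cols fun t => proj_fix hμ hPH (hrow_le (hPRXcols t))
  have hATPRX : (Afc Z)ᵀ * (PR * Xfc Z) = 0 := by
    ext s t
    rw [mul_apply_eq_mulVec, AT_rowSpace Z (hPRXcols t)]
    simp
  have hATX : (Afc Z)ᵀ * Xfc Z = 1 := AT_X hZrow hZcol hZrank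
  have hXTA : (Xfc Z)ᵀ * Afc Z = 1 := by
    have := congrArg Matrix.transpose hATX
    rwa [Matrix.transpose_mul, Matrix.transpose_transpose, Matrix.transpose_one] at this
  have hPRXTA : (PR * Xfc Z)ᵀ * Afc Z = 0 := by
    have := congrArg Matrix.transpose hATPRX
    rwa [Matrix.transpose_mul, Matrix.transpose_transpose, Matrix.transpose_zero] at this
  -- S annihilates the row space
  have hSr : ∀ r ∈ rowSpace J K, S *ᵥ r = 0 := by
    intro r hrr
    rw [hS, ← Matrix.mulVec_mulVec, Matrix.sub_mulVec, Matrix.one_mulVec,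
      proj_fix hμ hPR hrr, sub_self, Matrix.mulVec_zero]
  -- the key projection identity
  have key1 : S * (Xfc Z * ((Afc Z)ᵀ * (PH * ((Matrix.diagonal μ)⁻¹ * Afc Z)))) =
      S * (PH * ((Matrix.diagonal μ)⁻¹ * Afc Z)) := by
    apply eq_of_mulVec_eq
    intro v
    simp only [← Matrix.mulVec_mulVec]
    have hmem : PH *ᵥ ((Matrix.diagonal μ)⁻¹ *ᵥ Afc Z *ᵥ v) ∈ modelSpace Z := (hPH _).1
    have hr := XAT_fix hZrow hZcol hZrank hmem
    have h0 := hSr _ hr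
    rw [Matrix.mulVec_sub, ← Matrix.mulVec_mulVec, sub_eq_zero] at h0
    exact h0.symm
  -- the main computation
  have main : ((Xfc Z)ᵀ * (S * Xfc Z)) * ((Afc Z)ᵀ * (PH * ((Matrix.diagonal μ)⁻¹ * Afc Z))) =
      1 := by
    have term1 : (Xfc Z)ᵀ * (Matrix.diagonal μ * (PH * ((Matrix.diagonal μ)⁻¹ * Afc Z))) = 1 := by
      rw [selfadj_mul (proj_selfadj hPH), hDM0, ← Matrix.mul_assoc, ← Matrix.transpose_mul,
        hPHX, hXTA]
    have term2 : (Xfc Z)ᵀ *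
        (Matrix.diagonal μ * (PR * (PH * ((Matrix.diagonal μ)⁻¹ * Afc Z)))) = 0 := by
      rw [selfadj_mul (proj_selfadj hPR), selfadj_mul (proj_selfadj hPH), hDM0]
      have h1 : (Xfc Z)ᵀ * (PRᵀ * (PHᵀ * Afc Z)) = (PH * (PR * Xfc Z))ᵀ * Afc Z := by
        simp only [Matrix.transpose_mul, Matrix.mul_assoc]
      rw [h1, hPHPRX, hPRXTA]
    calc ((Xfc Z)ᵀ * (S * Xfc Z)) * ((Afc Z)ᵀ * (PH * ((Matrix.diagonal μ)⁻¹ * Afc Z)))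
        = (Xfc Z)ᵀ * (S * (Xfc Z * ((Afc Z)ᵀ * (PH * ((Matrix.diagonal μ)⁻¹ * Afc Z))))) := by
          simp only [Matrix.mul_assoc]
      _ = (Xfc Z)ᵀ * (S * (PH * ((Matrix.diagonal μ)⁻¹ * Afc Z))) := by rw [key1]
      _ = (Xfc Z)ᵀ * (Matrix.diagonal μ * (PH * ((Matrix.diagonal μ)⁻¹ * Afc Z))) -
          (Xfc Z)ᵀ * (Matrix.diagonal μ * (PR * (PH * ((Matrix.diagonal μ)⁻¹ * Afc Z)))) := by
          rw [hS]
          simp only [Matrix.sub_mul, Matrix.mul_sub, Matrix.one_mul, Matrix.mul_one,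
            Matrix.mul_assoc]
      _ = 1 := by rw [term1, term2, sub_zero]
  -- identify the block matrices
  have hJm : Matrix.fromBlocks
        ((Emat J K)ᵀ * S * Emat J K) ((Emat J K)ᵀ * S * Z)
        (Zᵀ * S * Emat J K) (Zᵀ * S * Z) = (Xfc Z)ᵀ * (S * Xfc Z) := by
    rw [Xfc, transpose_fromCols, mul_fromCols, fromRows_mul_fromCols]
    simp only [Matrix.mul_assoc]
  have hSig : Matrix.fromBlocks
        ((Bmat J K)ᵀ * PH * (Matrix.diagonal μ)⁻¹ * Bmat J K)
        ((Bmat J K)ᵀ * PH * (Matrix.diagonal μ)⁻¹ * Cmat J K *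
          (((Zred Z)ᵀ * Zred Z)⁻¹ * (Zred Z)ᵀ)ᵀ)
        (((Zred Z)ᵀ * Zred Z)⁻¹ * (Zred Z)ᵀ * (Cmat J K)ᵀ * PH * (Matrix.diagonal μ)⁻¹ *
          Bmat J K)
        (((Zred Z)ᵀ * Zred Z)⁻¹ * (Zred Z)ᵀ * (Cmat J K)ᵀ * PH * (Matrix.diagonal μ)⁻¹ *
          Cmat J K * (((Zred Z)ᵀ * Zred Z)⁻¹ * (Zred Z)ᵀ)ᵀ) =
      (Afc Z)ᵀ * (PH * ((Matrix.diagonal μ)⁻¹ * Afc Z)) := by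
    rw [Afc, Zminus, transpose_fromCols, mul_fromCols, mul_fromCols,
      fromRows_mul_fromCols]
    simp only [Matrix.transpose_mul, Matrix.transpose_transpose, Matrix.mul_assoc]
  rw [hJm, hSig]
  have hone := main
  exact ⟨(Matrix.isUnit_iff_isUnit_det _).mpr (Matrix.isUnit_det_of_right_inverse hone),
    Matrix.inv_eq_right_inv hone⟩
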